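/- Let S be a linear subspace of the real sequences with a norm N_Θ which is solid (if c ∈ S and |d_i| ≤ |c_i| for all i then d ∈ S and N_Θ(d) ≤ N_Θ(c)), and let 0 < A ≤ B be such that for every f ∈ X the sequence {g_i(f)}_{i∈ℕ} belongs to S and A·‖f‖ ≤ N_Θ({g_i(f)}) ≤ B·‖f‖. Then the lower frame inequality with respect to Θ̃ holds: (A/B)·‖f‖ ≤ N({g_i(f)}_{i∈ℕ}) for every f ∈ X. -/

import Mathlib

noncomputable section

open Set

/-- `M^c`: the set of `f ∈ X` with `|c i| ≤ |g i (f)|` for all `i`. -/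
def MSet {X : Type*} [NormedAddCommGroup X] [NormedSpace ℝ X]
    (g : ℕ → X →L[ℝ] ℝ) (c : ℕ → ℝ) : Set X :=
  {f | ∀ i, |c i| ≤ |g i f|}

/-- `Θ̃`: the set of scalar sequences `c` with `M^c ≠ ∅`. -/
def ThetaT {X : Type*} [NormedAddCommGroup X] [NormedSpace ℝ X]
    (g : ℕ → X →L[ℝ] ℝ) : Set (ℕ → ℝ) :=
  {c | (MSet g c).Nonempty}

/-- `N(c) = inf{‖f‖ : f ∈ M^c}`. -/
def NN {X : Type*} [NormedAddCommGroup X] [NormedSpace ℝ X]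
    (g : ℕ → X →L[ℝ] ℝ) (c : ℕ → ℝ) : ℝ :=
  sInf ((fun f => ‖f‖) '' MSet g c)

theorem lower_frame_from_solid_frame
    {X : Type*} [NormedAddCommGroup X] [NormedSpace ℝ X] [CompleteSpace X]
    (g : ℕ → X →L[ℝ] ℝ)
    (S : Submodule ℝ (ℕ → ℝ)) (NΘ : (ℕ → ℝ) → ℝ)
    -- `NΘ` is a norm on `S`:
    (hNadd : ∀ c ∈ S, ∀ d ∈ S, NΘ (c + d) ≤ NΘ c + NΘ d)
    (hNsmul : ∀ (r : ℝ), ∀ c ∈ S, NΘ (r • c) = |r| * NΘ c)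
    (hNdef : ∀ c ∈ S, NΘ c = 0 → c = 0)
    -- `S` is solid:
    (hsolid : ∀ c ∈ S, ∀ d : ℕ → ℝ, (∀ i, |d i| ≤ |c i|) → d ∈ S ∧ NΘ d ≤ NΘ c)
    -- frame property with bounds `0 < A ≤ B`:
    (A B : ℝ) (hA : 0 < A) (hAB : A ≤ B)
    (hmem : ∀ f : X, (fun i => g i f) ∈ S)
    (hframe : ∀ f : X, A * ‖f‖ ≤ NΘ (fun i => g i f) ∧ NΘ (fun i => g i f) ≤ B * ‖f‖) :
    ∀ f : X, (A / B) * ‖f‖ ≤ NN g (fun i => g i f) := by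
  intro f
  have hB : 0 < B := lt_of_lt_of_le hA hAB
  apply le_csInf
  · exact ⟨‖f‖, f, fun i => le_refl _, rfl⟩
  · rintro b ⟨h, hh, rfl⟩
    have h1 : NΘ (fun i => g i f) ≤ NΘ (fun i => g i h) :=
      (hsolid _ (hmem h) _ hh).2
    have h2 : A * ‖f‖ ≤ B * ‖h‖ :=
      le_trans (hframe f).1 (le_trans h1 (hframe h).2)
    rw [div_mul_eq_mul_div, div_le_iff₀ hB, mul_comm ‖h‖ B]
    exact h2
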